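/- Let A be a Hausdorff topological ring (not necessarily with identity) that is locally compact, totally disconnected, and compactly generated, i.e., A is generated as a ring by some compact subset. If A contains a dense (nonunital) subring B that is locally finite as a ring (every finite subset of B is contained in a finite subring of B), then A is compact. -/

import Mathlib

open Set

section Helpers

variable {A : Type*} [NonUnitalRing A] [TopologicalSpace A] [IsTopologicalRing A]

/-- Tube-lemma style openness: if `V` is compact and `W` open, then the set of `x` such that
`f (x, v) ∈ W` for all `v ∈ V` is open, for continuous `f`. -/
private lemma isOpen_stabilizer {f : A × A → A} (hf : Continuous f) {V W : Set A}
    (hV : IsCompact V) (hW : IsOpen W) :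
    IsOpen {x : A | ∀ v ∈ V, f (x, v) ∈ W} := by
  rw [isOpen_iff_mem_nhds]
  intro x hx
  have key : ∀ v ∈ V, ∃ s t : Set A, s ∈ nhds x ∧ IsOpen t ∧ v ∈ t ∧
      ∀ a ∈ s, ∀ b ∈ t, f (a, b) ∈ W := by
    intro v hv
    have h1 : f ⁻¹' W ∈ nhds (x, v) :=
      hf.continuousAt.preimage_mem_nhds (hW.mem_nhds (hx v hv))
    rw [mem_nhds_prod_iff] at h1
    obtain ⟨s, hs, t, ht, hst⟩ := h1
    obtain ⟨t', ht's, ht'o, hvt'⟩ := mem_nhds_iff.mp ht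
    exact ⟨s, t', hs, ht'o, hvt', fun a ha b hb =>
      hst (Set.mk_mem_prod ha (ht's hb))⟩
  choose! s t hs ht hvt hst using key
  obtain ⟨u, hu, hcov⟩ := hV.elim_nhds_subcover t fun v hv => (ht v hv).mem_nhds (hvt v hv)
  have hN : (⋂ v ∈ u, s v) ∈ nhds x :=
    (Filter.biInter_finset_mem u).mpr fun v hv => hs v (hu v hv)
  refine Filter.mem_of_superset hN ?_
  intro a ha v hv
  obtain ⟨w, hwu, hvw⟩ := Set.mem_iUnion₂.mp (hcov hv)
  exact hst w (hu w hwu) a (Set.mem_iInter₂.mp ha w hwu) v hvw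

private lemma isClosed_stabilizer {f : A × A → A} (hf : Continuous f) {V C : Set A}
    (hC : IsClosed C) : IsClosed {x : A | ∀ v ∈ V, f (x, v) ∈ C} := by
  have heq : {x : A | ∀ v ∈ V, f (x, v) ∈ C} = ⋂ v ∈ V, {x | f (x, v) ∈ C} := by
    ext a; simp
  rw [heq]
  exact isClosed_biInter fun v hv =>
    hC.preimage (hf.comp (continuous_id.prodMk continuous_const))

/-- van Dantzig for the additive group: a locally compact, totally disconnected Hausdorff
topological ring has a compact open additive subgroup (as a set). -/
private lemma exists_compact_open_addSubgroup' [T2Space A] [LocallyCompactSpace A]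
    [TotallyDisconnectedSpace A] :
    ∃ U : Set A, IsCompact U ∧ IsOpen U ∧ (0 : A) ∈ U ∧
      ∀ x ∈ U, ∀ y ∈ U, x - y ∈ U := by
  obtain ⟨Q, hQc, hQn⟩ := exists_compact_mem_nhds (0 : A)
  obtain ⟨V, hVclopen, hV0, hVQ⟩ :=
    (loc_compact_Haus_tot_disc_of_zero_dim (H := A)).mem_nhds_iff.mp hQn
  have hVcl : IsClosed V := hVclopen.1
  have hVo : IsOpen V := hVclopen.2
  have hVc : IsCompact V := hQc.of_isClosed_subset hVcl hVQ
  set P : Set A := {x : A | ∀ v ∈ V, (fun p : A × A => p.1 + p.2) (x, v) ∈ V} with hPdef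
  have hPo : IsOpen P := isOpen_stabilizer continuous_add hVc hVo
  have hPc : IsClosed P := isClosed_stabilizer continuous_add hVcl
  set U : Set A := P ∩ (Neg.neg ⁻¹' P) with hUdef
  have hUP : ∀ x ∈ U, (∀ v ∈ V, x + v ∈ V) ∧ ∀ v ∈ V, -x + v ∈ V := fun x hx => ⟨hx.1, hx.2⟩
  refine ⟨U, ?_, hPo.inter (hPo.preimage continuous_neg), ⟨?_, ?_⟩, ?_⟩
  · -- compact
    have hsub : U ⊆ V := fun x hx => by simpa using hx.1 0 hV0
    exact hVc.of_isClosed_subset (hPc.inter (hPc.preimage continuous_neg)) hsub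
  · intro v hv; simpa using hv
  · intro v hv; simpa using hv
  · rintro x ⟨hx1, hx2⟩ y ⟨hy1, hy2⟩
    constructor
    · intro v hv
      have h1 : -y + v ∈ V := hy2 v hv
      have h2 : x + (-y + v) ∈ V := hx1 _ h1
      have heq : x - y + v = x + (-y + v) := by abel
      show x - y + v ∈ V
      rw [heq]; exact h2
    · show -(x - y) ∈ P
      intro v hv
      have h1 : -x + v ∈ V := hx2 v hv
      have h2 : y + (-x + v) ∈ V := hy1 _ h1
      have heq : -(x - y) + v = y + (-x + v) := by abel
      show -(x - y) + v ∈ V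
      rw [heq]; exact h2

end Helpers

/-- A locally compact, totally disconnected, compactly generated Hausdorff
topological ring containing a dense locally finite subring is compact. -/
theorem compact_of_dense_locallyFinite_subring {A : Type*} [NonUnitalRing A]
    [TopologicalSpace A] [IsTopologicalRing A] [T2Space A]
    [LocallyCompactSpace A] [TotallyDisconnectedSpace A]
    (hgen : ∃ K : Set A, IsCompact K ∧ NonUnitalSubring.closure K = ⊤)
    (B : NonUnitalSubring A) (hB : Dense (B : Set A))
    (hlf : ∀ S : Finset A, (S : Set A) ⊆ (B : Set A) →
      ∃ C : NonUnitalSubring A, (C : Set A) ⊆ (B : Set A) ∧ (C : Set A).Finite ∧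
        (S : Set A) ⊆ (C : Set A)) :
    CompactSpace A := by
  classical
  obtain ⟨K, hKc, hKgen⟩ := hgen
  obtain ⟨U, hUc, hUo, hU0, hUsub⟩ := exists_compact_open_addSubgroup' (A := A)
  have hUcl : IsClosed U := hUc.isClosed
  -- Step 1 : the compact open subring W0
  set W0 : Set A := U ∩ {x : A | ∀ v ∈ U, (fun p : A × A => p.1 * p.2) (x, v) ∈ U}
    with hW0def
  have hW0U : W0 ⊆ U := inter_subset_left
  have hW0o : IsOpen W0 := hUo.inter (isOpen_stabilizer continuous_mul hUc hUo)
  have hW0c : IsCompact W0 :=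
    hUc.of_isClosed_subset (hUcl.inter (isClosed_stabilizer continuous_mul hUcl)) hW0U
  have hW0zero : (0 : A) ∈ W0 := by
    refine ⟨hU0, fun v hv => ?_⟩
    show (0 : A) * v ∈ U
    rw [zero_mul]; exact hU0
  have hW0sub : ∀ x ∈ W0, ∀ y ∈ W0, x - y ∈ W0 := by
    rintro x ⟨hxU, hx⟩ y ⟨hyU, hy⟩
    refine ⟨hUsub x hxU y hyU, fun v hv => ?_⟩
    show (x - y) * v ∈ U
    rw [sub_mul]
    exact hUsub _ (hx v hv) _ (hy v hv)
  have hW0mul : ∀ x ∈ W0, ∀ y ∈ W0, x * y ∈ W0 := by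
    rintro x ⟨hxU, hx⟩ y ⟨hyU, hy⟩
    refine ⟨hx y hyU, fun v hv => ?_⟩
    show (x * y) * v ∈ U
    rw [mul_assoc]
    exact hx _ (hy v hv)
  have hW0neg : ∀ x ∈ W0, -x ∈ W0 := by
    intro x hx
    have := hW0sub 0 hW0zero x hx
    rwa [zero_sub] at this
  have hW0add : ∀ x ∈ W0, ∀ y ∈ W0, x + y ∈ W0 := by
    intro x hx y hy
    have := hW0sub x hx (-y) (hW0neg y hy)
    rwa [sub_neg_eq_add] at this
  -- Step 2 : cover K by finitely many translates b + W0, b ∈ B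
  have hcov : ∀ k ∈ K, ∃ i : {b : A // b ∈ (B : Set A)}, k ∈ {y : A | y - i.1 ∈ W0} := by
    intro k _
    have hopen : IsOpen {y : A | k - y ∈ W0} :=
      hW0o.preimage (continuous_const.sub continuous_id)
    have hne : {y : A | k - y ∈ W0}.Nonempty := ⟨k, by simp [hW0zero]⟩
    obtain ⟨b, hbB, hb⟩ := hB.exists_mem_open hopen hne
    refine ⟨⟨b, hbB⟩, ?_⟩
    show k - b ∈ W0
    exact hb
  obtain ⟨tF, htF⟩ := hKc.elim_finite_subcover
    (fun i : {b : A // b ∈ (B : Set A)} => {y : A | y - i.1 ∈ W0})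
    (fun i => hW0o.preimage (continuous_id.sub continuous_const))
    (fun k hk => mem_iUnion.mpr (hcov k hk))
  set F : Finset A := tF.image Subtype.val with hFdef
  have hFB : (F : Set A) ⊆ (B : Set A) := by
    intro f hf
    simp only [hFdef, Finset.coe_image, mem_image] at hf
    obtain ⟨i, _, rfl⟩ := hf
    exact i.2
  have hKF : ∀ k ∈ K, ∃ f ∈ F, k - f ∈ W0 := by
    intro k hk
    obtain ⟨i, hi, hki⟩ := mem_iUnion₂.mp (htF hk)
    exact ⟨i.1, Finset.mem_image_of_mem _ hi, hki⟩
  -- Step 3 : a finite subring C₀ of B containing F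
  obtain ⟨C₀, hC₀B, hC₀fin, hFC₀⟩ := hlf F hFB
  -- Step 4 : stabilize W0 with respect to C₀
  set C0s : Set A := (C₀ : Set A) with hC0sdef
  set W1 : Set A := W0 ∩ ((⋂ c ∈ C0s, {x : A | c * x ∈ W0}) ∩
      ((⋂ c ∈ C0s, {x : A | x * c ∈ W0}) ∩
        (⋂ c ∈ C0s, ⋂ c' ∈ C0s, {x : A | (c * x) * c' ∈ W0}))) with hW1def
  have hW1mem : ∀ x : A, x ∈ W1 ↔ x ∈ W0 ∧ (∀ c ∈ C0s, c * x ∈ W0) ∧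
      (∀ c ∈ C0s, x * c ∈ W0) ∧ (∀ c ∈ C0s, ∀ c' ∈ C0s, (c * x) * c' ∈ W0) := by
    intro x
    simp only [hW1def, mem_inter_iff, mem_iInter, mem_setOf_eq]
  have hW1W0 : W1 ⊆ W0 := fun x hx => ((hW1mem x).mp hx).1
  have hW1o : IsOpen W1 := by
    refine hW0o.inter (IsOpen.inter ?_ (IsOpen.inter ?_ ?_))
    · exact hC₀fin.isOpen_biInter fun c _ =>
        hW0o.preimage (continuous_const.mul continuous_id)
    · exact hC₀fin.isOpen_biInter fun c _ =>
        hW0o.preimage (continuous_id.mul continuous_const)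
    · exact hC₀fin.isOpen_biInter fun c _ =>
        hC₀fin.isOpen_biInter fun c' _ =>
          hW0o.preimage ((continuous_const.mul continuous_id).mul continuous_const)
  have hW1c : IsCompact W1 := by
    have hW0cl : IsClosed W0 := hW0c.isClosed
    have h1 : IsClosed (⋂ c ∈ C0s, {x : A | c * x ∈ W0}) :=
      isClosed_biInter fun c _ => hW0cl.preimage (continuous_const.mul continuous_id)
    have h2 : IsClosed (⋂ c ∈ C0s, {x : A | x * c ∈ W0}) :=
      isClosed_biInter fun c _ => hW0cl.preimage (continuous_id.mul continuous_const)
    have h3 : IsClosed (⋂ c ∈ C0s, ⋂ c' ∈ C0s, {x : A | (c * x) * c' ∈ W0}) :=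
      isClosed_biInter fun c _ => isClosed_biInter fun c' _ =>
        hW0cl.preimage ((continuous_const.mul continuous_id).mul continuous_const)
    exact hW0c.of_isClosed_subset (hW0cl.inter (h1.inter (h2.inter h3))) inter_subset_left
  have hW1zero : (0 : A) ∈ W1 := by
    rw [hW1mem]
    refine ⟨hW0zero, fun c _ => ?_, fun c _ => ?_, fun c _ c' _ => ?_⟩
    · rw [mul_zero]; exact hW0zero
    · rw [zero_mul]; exact hW0zero
    · rw [mul_zero, zero_mul]; exact hW0zero
  have hW1sub : ∀ x ∈ W1, ∀ y ∈ W1, x - y ∈ W1 := by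
    intro x hx y hy
    rw [hW1mem] at hx hy ⊢
    obtain ⟨hx0, hx1, hx2, hx3⟩ := hx
    obtain ⟨hy0, hy1, hy2, hy3⟩ := hy
    refine ⟨hW0sub x hx0 y hy0, fun c hc => ?_, fun c hc => ?_, fun c hc c' hc' => ?_⟩
    · rw [mul_sub]; exact hW0sub _ (hx1 c hc) _ (hy1 c hc)
    · rw [sub_mul]; exact hW0sub _ (hx2 c hc) _ (hy2 c hc)
    · rw [mul_sub, sub_mul]; exact hW0sub _ (hx3 c hc c' hc') _ (hy3 c hc c' hc')
  have hW1neg : ∀ x ∈ W1, -x ∈ W1 := by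
    intro x hx
    have := hW1sub 0 hW1zero x hx
    rwa [zero_sub] at this
  have hW1add : ∀ x ∈ W1, ∀ y ∈ W1, x + y ∈ W1 := by
    intro x hx y hy
    have := hW1sub x hx (-y) (hW1neg y hy)
    rwa [sub_neg_eq_add] at this
  have hW1mul : ∀ x ∈ W1, ∀ y ∈ W1, x * y ∈ W1 := by
    intro x hx y hy
    rw [hW1mem] at hx hy ⊢
    obtain ⟨hx0, hx1, hx2, hx3⟩ := hx
    obtain ⟨hy0, hy1, hy2, hy3⟩ := hy
    refine ⟨hW0mul x hx0 y hy0, fun c hc => ?_, fun c hc => ?_, fun c hc c' hc' => ?_⟩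
    · rw [← mul_assoc]; exact hW0mul _ (hx1 c hc) _ hy0
    · rw [mul_assoc]; exact hW0mul _ hx0 _ (hy2 c hc)
    · rw [← mul_assoc c x y, mul_assoc (c * x) y c']
      exact hW0mul _ (hx1 c hc) _ (hy2 c' hc')
  -- C₀-stability of W1
  have hW1stabL : ∀ c₀ ∈ C0s, ∀ x ∈ W1, c₀ * x ∈ W1 := by
    intro c₀ hc₀ x hx
    rw [hW1mem] at hx ⊢
    obtain ⟨hx0, hx1, hx2, hx3⟩ := hx
    refine ⟨hx1 c₀ hc₀, fun c hc => ?_, fun c hc => ?_, fun c hc c' hc' => ?_⟩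
    · rw [← mul_assoc]; exact hx1 _ (mul_mem hc hc₀)
    · exact hx3 c₀ hc₀ c hc
    · rw [← mul_assoc c c₀ x]; exact hx3 _ (mul_mem hc hc₀) c' hc'
  have hW1stabR : ∀ c₀ ∈ C0s, ∀ x ∈ W1, x * c₀ ∈ W1 := by
    intro c₀ hc₀ x hx
    rw [hW1mem] at hx ⊢
    obtain ⟨hx0, hx1, hx2, hx3⟩ := hx
    refine ⟨hx2 c₀ hc₀, fun c hc => ?_, fun c hc => ?_, fun c hc c' hc' => ?_⟩
    · rw [← mul_assoc]; exact hx3 c hc c₀ hc₀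
    · rw [mul_assoc]; exact hx2 _ (mul_mem hc₀ hc)
    · rw [← mul_assoc c x c₀, mul_assoc (c * x) c₀ c']
      exact hx3 c hc _ (mul_mem hc₀ hc')
  -- Step 5 : finitely many representatives E ⊆ B ∩ W0 of W0 modulo W1
  have hcovE : ∀ x ∈ W0, ∃ i : {b : A // b ∈ (B : Set A) ∧ b ∈ W0},
      x ∈ {y : A | y - i.1 ∈ W1} := by
    intro x hx
    have hopen : IsOpen {y : A | x - y ∈ W1} :=
      hW1o.preimage (continuous_const.sub continuous_id)
    have hne : {y : A | x - y ∈ W1}.Nonempty := ⟨x, by simp [hW1zero]⟩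
    obtain ⟨b, hbB, hb⟩ := hB.exists_mem_open hopen hne
    have hbW1 : x - b ∈ W1 := hb
    have hbW0 : b ∈ W0 := by
      have := hW0sub x hx (x - b) (hW1W0 hbW1)
      rwa [sub_sub_cancel] at this
    exact ⟨⟨b, hbB, hbW0⟩, by
      show x - b ∈ W1
      exact hbW1⟩
  obtain ⟨tE, htE⟩ := hW0c.elim_finite_subcover
    (fun i : {b : A // b ∈ (B : Set A) ∧ b ∈ W0} => {y : A | y - i.1 ∈ W1})
    (fun i => hW1o.preimage (continuous_id.sub continuous_const))
    (fun x hx => mem_iUnion.mpr (hcovE x hx))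
  set E : Finset A := tE.image Subtype.val with hEdef
  have hEB : (E : Set A) ⊆ (B : Set A) := by
    intro e he
    simp only [hEdef, Finset.coe_image, mem_image] at he
    obtain ⟨i, _, rfl⟩ := he
    exact i.2.1
  have hEW0 : (E : Set A) ⊆ W0 := by
    intro e he
    simp only [hEdef, Finset.coe_image, mem_image] at he
    obtain ⟨i, _, rfl⟩ := he
    exact i.2.2
  have hW0E : ∀ x ∈ W0, ∃ e ∈ E, x - e ∈ W1 := by
    intro x hx
    obtain ⟨i, hi, hxi⟩ := mem_iUnion₂.mp (htE hx)
    exact ⟨i.1, Finset.mem_image_of_mem _ hi, hxi⟩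
  -- Step 6 : C₁, the subring generated by C₀ ∪ E; it is finite by local finiteness
  set genS : Set A := C0s ∪ (E : Set A) with hgenSdef
  set C₁ : NonUnitalSubring A := NonUnitalSubring.closure genS with hC₁def
  have hgenwB : genS ⊆ (B : Set A) := union_subset hC₀B hEB
  have hgenFin : genS.Finite := hC₀fin.union E.finite_toSet
  have hC₁fin : ((C₁ : Set A)).Finite := by
    obtain ⟨C'', hC''B, hC''fin, hsubC''⟩ := hlf hgenFin.toFinset
      (by rw [Set.Finite.coe_toFinset]; exact hgenwB)
    have hle : C₁ ≤ C'' := NonUnitalSubring.closure_le.mpr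
      (by rw [Set.Finite.coe_toFinset hgenFin] at hsubC''; exact hsubC'')
    exact hC''fin.subset hle
  have hC0C₁ : C0s ⊆ (C₁ : Set A) :=
    subset_trans subset_union_left NonUnitalSubring.subset_closure
  have hEC₁ : (E : Set A) ⊆ (C₁ : Set A) :=
    subset_trans subset_union_right NonUnitalSubring.subset_closure
  -- Step 7 : the candidate compact subring S = C₁ + W1 (as a set SS)
  set SS : Set A := {a : A | ∃ c ∈ (C₁ : Set A), ∃ v ∈ W1, a = c + v} with hSSdef
  have ssIntro : ∀ c ∈ (C₁ : Set A), ∀ v ∈ W1, c + v ∈ SS :=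
    fun c hc v hv => ⟨c, hc, v, hv, rfl⟩
  have ssC₁ : (C₁ : Set A) ⊆ SS := fun c hc => by
    have := ssIntro c hc 0 hW1zero
    rwa [add_zero] at this
  have ssW1 : W1 ⊆ SS := fun v hv => by
    have := ssIntro 0 (zero_mem C₁) v hv
    rwa [zero_add] at this
  have ssZero : (0 : A) ∈ SS := ssC₁ (zero_mem C₁)
  have ssAdd : ∀ a ∈ SS, ∀ b ∈ SS, a + b ∈ SS := by
    rintro a ⟨c, hc, v, hv, rfl⟩ b ⟨c', hc', v', hv', rfl⟩
    have heq : c + v + (c' + v') = (c + c') + (v + v') := by abel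
    rw [heq]
    exact ssIntro _ (add_mem hc hc') _ (hW1add v hv v' hv')
  have ssNeg : ∀ a ∈ SS, -a ∈ SS := by
    rintro a ⟨c, hc, v, hv, rfl⟩
    have heq : -(c + v) = (-c) + (-v) := by abel
    rw [heq]
    exact ssIntro _ (neg_mem hc) _ (hW1neg v hv)
  -- Step 8 : the key absorption property, proved via an auxiliary subring T
  have hKey : ∀ c ∈ (C₁ : Set A), (∀ v ∈ W1, c * v ∈ SS) ∧ (∀ v ∈ W1, v * c ∈ SS) := by
    set T : NonUnitalSubring A :=
      { carrier := {c : A | c ∈ (C₁ : Set A) ∧ (∀ v ∈ W1, c * v ∈ SS) ∧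
          (∀ v ∈ W1, v * c ∈ SS)}
        zero_mem' := by
          refine ⟨zero_mem C₁, fun v hv => ?_, fun v hv => ?_⟩
          · rw [zero_mul]; exact ssZero
          · rw [mul_zero]; exact ssZero
        add_mem' := by
          rintro a b ⟨haC, ha1, ha2⟩ ⟨hbC, hb1, hb2⟩
          refine ⟨add_mem haC hbC, fun v hv => ?_, fun v hv => ?_⟩
          · rw [add_mul]; exact ssAdd _ (ha1 v hv) _ (hb1 v hv)
          · rw [mul_add]; exact ssAdd _ (ha2 v hv) _ (hb2 v hv)
        neg_mem' := by
          rintro a ⟨haC, ha1, ha2⟩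
          refine ⟨neg_mem haC, fun v hv => ?_, fun v hv => ?_⟩
          · rw [neg_mul]; exact ssNeg _ (ha1 v hv)
          · rw [mul_neg]; exact ssNeg _ (ha2 v hv)
        mul_mem' := by
          rintro a b ⟨haC, ha1, ha2⟩ ⟨hbC, hb1, hb2⟩
          refine ⟨mul_mem haC hbC, fun v hv => ?_, fun v hv => ?_⟩
          · rw [mul_assoc]
            obtain ⟨d, hd, w, hw, heq⟩ := hb1 v hv
            rw [heq, mul_add]
            refine ssAdd _ (ssC₁ (mul_mem haC hd)) _ (ha1 w hw)
          · rw [← mul_assoc]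
            obtain ⟨d, hd, w, hw, heq⟩ := ha2 v hv
            rw [heq, add_mul]
            refine ssAdd _ (ssC₁ (mul_mem hd hbC)) _ (hb2 w hw) } with hTdef
    have hgenT : genS ⊆ (T : Set A) := by
      rintro g (hgC0 | hgE)
      · refine ⟨hC0C₁ hgC0, fun v hv => ?_, fun v hv => ?_⟩
        · exact ssW1 (hW1stabL g hgC0 v hv)
        · exact ssW1 (hW1stabR g hgC0 v hv)
      · refine ⟨hEC₁ hgE, fun v hv => ?_, fun v hv => ?_⟩
        · -- g * v ∈ W0, so it is e + w for some e ∈ E, w ∈ W1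
          have hgvW0 : g * v ∈ W0 := hW0mul g (hEW0 hgE) v (hW1W0 hv)
          obtain ⟨e, heE, hew⟩ := hW0E _ hgvW0
          have heq : g * v = e + (g * v - e) := by abel
          rw [heq]
          exact ssIntro _ (hEC₁ heE) _ hew
        · have hgvW0 : v * g ∈ W0 := hW0mul v (hW1W0 hv) g (hEW0 hgE)
          obtain ⟨e, heE, hew⟩ := hW0E _ hgvW0
          have heq : v * g = e + (v * g - e) := by abel
          rw [heq]
          exact ssIntro _ (hEC₁ heE) _ hew
    have hle : C₁ ≤ T := NonUnitalSubring.closure_le.mpr hgenT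
    intro c hc
    obtain ⟨-, h1, h2⟩ := hle hc
    exact ⟨h1, h2⟩
  -- SS is closed under multiplication
  have ssMul : ∀ a ∈ SS, ∀ b ∈ SS, a * b ∈ SS := by
    rintro a ⟨c, hc, v, hv, rfl⟩ b ⟨c', hc', v', hv', rfl⟩
    have heq : (c + v) * (c' + v') = (c * c' + c * v') + (v * c' + v * v') := by
      rw [add_mul, mul_add, mul_add]
    rw [heq]
    refine ssAdd _ (ssAdd _ (ssC₁ (mul_mem hc hc')) _ ((hKey c hc).1 v' hv'))
      _ (ssAdd _ ((hKey c' hc').2 v hv) _ (ssW1 (hW1mul v hv v' hv')))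
  -- SS is compact
  have ssCompact : IsCompact SS := by
    have heq : SS = ⋃ c ∈ (C₁ : Set A), (fun v : A => c + v) '' W1 := by
      ext a
      simp only [hSSdef, mem_setOf_eq, mem_iUnion, mem_image]
      constructor
      · rintro ⟨c, hc, v, hv, rfl⟩; exact ⟨c, hc, v, hv, rfl⟩
      · rintro ⟨c, hc, v, hv, rfl⟩; exact ⟨c, hc, v, hv, rfl⟩
    rw [heq]
    exact hC₁fin.isCompact_biUnion fun c _ =>
      hW1c.image (continuous_const.add continuous_id)
  -- K ⊆ SS
  have hKSS : K ⊆ SS := by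
    intro k hk
    obtain ⟨f, hfF, hfW0⟩ := hKF k hk
    obtain ⟨e, heE, hew⟩ := hW0E _ hfW0
    have hfC₁ : f ∈ (C₁ : Set A) := hC0C₁ (hFC₀ hfF)
    have heq : k = (f + e) + (k - f - e) := by abel
    rw [heq]
    exact ssIntro _ (add_mem hfC₁ (hEC₁ heE)) _ hew
  -- Step 9 : conclude
  set S : NonUnitalSubring A :=
    { carrier := SS
      zero_mem' := ssZero
      add_mem' := fun {a b} ha hb => ssAdd a ha b hb
      neg_mem' := fun {a} ha => ssNeg a ha
      mul_mem' := fun {a b} ha hb => ssMul a ha b hb } with hSdef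
  have hle : NonUnitalSubring.closure K ≤ S := NonUnitalSubring.closure_le.mpr hKSS
  rw [hKgen] at hle
  have huniv : SS = univ := by
    apply eq_univ_of_forall
    intro a
    exact hle (by trivial : a ∈ (⊤ : NonUnitalSubring A))
  rw [← isCompact_univ_iff, ← huniv]
  exact ssCompact
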